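/- arXiv:1803.10165 — 3 statements merged into one kernel-verified Lean document; each statement's English description precedes it below -/
import Mathlib

section
/- For any two probability measures ν and ν' on ℝ with finite first moments, |G₀(ν) − G₀(ν')| ≤ (1/m)·|∫ h(Ḡ₀(ν)+z) dν(z) − ∫ h(Ḡ₀(ν)+z) dν'(z)|, where Ḡ₀(ν) is the inverse of H(·,ν) at the point 0. -/
open MeasureTheory

section Aux

variable {h : ℝ → ℝ} {m M : ℝ}

lemma aux_integrable (hM : 0 ≤ M) (hmono : Monotone h)
    (hbil : ∀ x y : ℝ, m * |x - y| ≤ |h x - h y| ∧ |h x - h y| ≤ M * |x - y|)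
    (ν : Measure ℝ) [IsProbabilityMeasure ν]
    (hν : Integrable (fun z : ℝ => z) ν) (x : ℝ) :
    Integrable (fun z : ℝ => h (x + z)) ν := by
  refine Integrable.mono' (g := fun z => (|h 0| + M * |x|) + M * |z|)
    (((integrable_const _).add (hν.abs.const_mul M)))
    ((hmono.measurable.comp (measurable_const.add measurable_id)).aestronglyMeasurable)
    (Filter.Eventually.of_forall fun z => ?_)
  have h1 := (hbil (x + z) 0).2
  have h2 : |x + z - 0| ≤ |x| + |z| := by rw [sub_zero]; exact abs_add_le x z
  have h3 := abs_sub_abs_le_abs_sub (h (x + z)) (h 0)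
  show |h (x + z)| ≤ (|h 0| + M * |x|) + M * |z|
  nlinarith [abs_nonneg (h 0), abs_nonneg x, abs_nonneg z]

/-- bi-Lipschitz property of `Hν`. -/
lemma aux_diff (hm : 0 < m) (hmM : m ≤ M) (hmono : Monotone h)
    (hbil : ∀ x y : ℝ, m * |x - y| ≤ |h x - h y| ∧ |h x - h y| ≤ M * |x - y|)
    (ν : Measure ℝ) [IsProbabilityMeasure ν]
    (hν : Integrable (fun z : ℝ => z) ν) {x y : ℝ} (hxy : y ≤ x) :
    m * (x - y) ≤ (∫ z, h (x + z) ∂ν) - ∫ z, h (y + z) ∂ν ∧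
      (∫ z, h (x + z) ∂ν) - ∫ z, h (y + z) ∂ν ≤ M * (x - y) := by
  have hM : 0 ≤ M := le_trans hm.le hmM
  have ix := aux_integrable hM hmono hbil ν hν x
  have iy := aux_integrable hM hmono hbil ν hν y
  have hsub : (∫ z, h (x + z) ∂ν) - ∫ z, h (y + z) ∂ν
      = ∫ z, (h (x + z) - h (y + z)) ∂ν := (integral_sub ix iy).symm
  have hpt : ∀ z : ℝ, m * (x - y) ≤ h (x + z) - h (y + z) ∧
      h (x + z) - h (y + z) ≤ M * (x - y) := by
    intro z
    have hle : h (y + z) ≤ h (x + z) := hmono (by linarith)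
    have hb := hbil (x + z) (y + z)
    have habs : |x + z - (y + z)| = x - y := by
      rw [abs_of_nonneg (by linarith)]; ring
    rw [habs, abs_of_nonneg (by linarith)] at hb
    exact hb
  constructor
  · rw [hsub]
    calc m * (x - y) = ∫ _, m * (x - y) ∂ν := by simp
      _ ≤ _ := integral_mono (integrable_const _) (ix.sub iy) fun z => (hpt z).1
  · rw [hsub]
    calc (∫ z, (h (x + z) - h (y + z)) ∂ν) ≤ ∫ _, M * (x - y) ∂ν :=
        integral_mono (ix.sub iy) (integrable_const _) fun z => (hpt z).2
      _ = M * (x - y) := by simp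

lemma aux_root (hm : 0 < m) (hmM : m ≤ M) (hmono : Monotone h)
    (hbil : ∀ x y : ℝ, m * |x - y| ≤ |h x - h y| ∧ |h x - h y| ≤ M * |x - y|)
    (ν : Measure ℝ) [IsProbabilityMeasure ν]
    (hν : Integrable (fun z : ℝ => z) ν) :
    (∫ z, h (sInf {x : ℝ | 0 ≤ ∫ z, h (x + z) ∂ν} + z) ∂ν) = 0 ∧
      BddBelow {x : ℝ | 0 ≤ ∫ z, h (x + z) ∂ν} ∧
      {x : ℝ | 0 ≤ ∫ z, h (x + z) ∂ν}.Nonempty := by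
  have hM : 0 ≤ M := le_trans hm.le hmM
  set Hν : ℝ → ℝ := fun x => ∫ z, h (x + z) ∂ν with hH
  have hdiff : ∀ {x y : ℝ}, y ≤ x → m * (x - y) ≤ Hν x - Hν y ∧ Hν x - Hν y ≤ M * (x - y) :=
    fun {x y} hxy => aux_diff hm hmM hmono hbil ν hν hxy
  set S : Set ℝ := {x : ℝ | 0 ≤ Hν x} with hS
  -- nonempty
  have hne : S.Nonempty := by
    refine ⟨|Hν 0| / m, ?_⟩
    have hx0 : (0:ℝ) ≤ |Hν 0| / m := div_nonneg (abs_nonneg _) hm.le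
    have := (hdiff hx0).1
    have hmul : m * (|Hν 0| / m - 0) = |Hν 0| := by field_simp; ring
    rw [hmul] at this
    have := neg_abs_le (Hν 0)
    simp only [hS, Set.mem_setOf_eq]
    linarith
  -- bdd below
  have hbdd : BddBelow S := by
    refine ⟨-(|Hν 0| / m), fun x hx => ?_⟩
    by_contra hcon
    push_neg at hcon
    have hx0 : x ≤ 0 := by
      have : (0:ℝ) ≤ |Hν 0| / m := div_nonneg (abs_nonneg _) hm.le
      linarith
    have := (hdiff hx0).1
    have hx' : Hν x ≤ Hν 0 + m * x := by linarith
    have : m * x < m * (-(|Hν 0| / m)) := by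
      exact mul_lt_mul_of_pos_left hcon hm
    have hmm : m * (-(|Hν 0| / m)) = -|Hν 0| := by field_simp
    have := le_abs_self (Hν 0)
    have hxS : 0 ≤ Hν x := hx
    linarith
  refine ⟨?_, hbdd, hne⟩
  set a := sInf S with ha
  -- continuity of Hν
  have hcont : Continuous Hν := by
    have : LipschitzWith (Real.toNNReal M) Hν := by
      refine LipschitzWith.of_dist_le_mul fun x y => ?_
      rw [Real.dist_eq, Real.dist_eq, Real.coe_toNNReal M hM]
      rcases le_total y x with hxy | hxy
      · have := (hdiff hxy).2
        have h1 := (hdiff hxy).1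
        have hnn : 0 ≤ Hν x - Hν y := by nlinarith
        rw [abs_of_nonneg hnn, abs_of_nonneg (by linarith : (0:ℝ) ≤ x - y)]
        linarith
      · have := (hdiff hxy).2
        have h1 := (hdiff hxy).1
        have hnn : 0 ≤ Hν y - Hν x := by nlinarith
        rw [abs_of_nonpos (by linarith : Hν x - Hν y ≤ 0),
          abs_of_nonpos (by linarith : x - y ≤ 0)]
        linarith
    exact this.continuous
  have hclosed : IsClosed S := by
    have : S = Hν ⁻¹' Set.Ici 0 := rfl
    rw [this]
    exact isClosed_Ici.preimage hcont
  have hmem : a ∈ S := hclosed.csInf_mem hne hbdd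
  have hge : 0 ≤ Hν a := hmem
  have hle : Hν a ≤ 0 := by
    by_contra hcon
    push_neg at hcon
    have hMpos : 0 < M := lt_of_lt_of_le hm hmM
    set ε : ℝ := Hν a / (2 * M) with hε
    have hεpos : 0 < ε := div_pos hcon (by linarith)
    have hnotin : a - ε ∉ S := fun hmem' => by
      have := csInf_le hbdd hmem'
      linarith
    have hlt : Hν (a - ε) < 0 := by
      by_contra hge'
      push_neg at hge'
      exact hnotin hge'
    have := (hdiff (by linarith : a - ε ≤ a)).2
    have hsimp : a - (a - ε) = ε := by ring
    rw [hsimp] at this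
    have : Hν a ≤ M * ε := by linarith
    rw [hε] at this
    have : Hν a ≤ Hν a / 2 := by
      calc Hν a ≤ M * (Hν a / (2 * M)) := this
        _ = Hν a / 2 := by field_simp
    linarith
  linarith

end Aux

section Aux2

variable {h : ℝ → ℝ} {m M : ℝ}

lemma aux_G0 (hm : 0 < m) (hmM : m ≤ M) (hmono : Monotone h)
    (hbil : ∀ x y : ℝ, m * |x - y| ≤ |h x - h y| ∧ |h x - h y| ≤ M * |x - y|)
    (ν : Measure ℝ) [IsProbabilityMeasure ν]
    (hν : Integrable (fun z : ℝ => z) ν) :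
    sInf {x : ℝ | 0 ≤ x ∧ 0 ≤ ∫ z, h (x + z) ∂ν}
      = max 0 (sInf {x : ℝ | 0 ≤ ∫ z, h (x + z) ∂ν}) := by
  obtain ⟨hroot, hbdd, hne⟩ := aux_root hm hmM hmono hbil ν hν
  set Hν : ℝ → ℝ := fun x => ∫ z, h (x + z) ∂ν with hH
  set a := sInf {x : ℝ | 0 ≤ Hν x} with ha
  have hset : {x : ℝ | 0 ≤ x ∧ 0 ≤ Hν x} = Set.Ici (max 0 a) := by
    ext x
    simp only [Set.mem_setOf_eq, Set.mem_Ici, max_le_iff]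
    constructor
    · rintro ⟨hx0, hxH⟩
      exact ⟨hx0, csInf_le hbdd hxH⟩
    · rintro ⟨hx0, hax⟩
      refine ⟨hx0, ?_⟩
      have := (aux_diff hm hmM hmono hbil ν hν hax).1
      have hHa : Hν a = 0 := hroot
      nlinarith
  rw [hset, csInf_Ici]

end Aux2

/-- For any two probability measures ν and ν' on ℝ with finite first moments,
`|G₀(ν) − G₀(ν')| ≤ (1/m)·|∫ h(Ḡ₀(ν)+z) dν(z) − ∫ h(Ḡ₀(ν)+z) dν'(z)|`. -/
theorem G0_lipschitz_estimate
    (h : ℝ → ℝ) (m M : ℝ) (hm : 0 < m) (hmM : m ≤ M)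
    (hmono : Monotone h)
    (hbil : ∀ x y : ℝ, m * |x - y| ≤ |h x - h y| ∧ |h x - h y| ≤ M * |x - y|)
    (ν ν' : Measure ℝ) [IsProbabilityMeasure ν] [IsProbabilityMeasure ν']
    (hν : Integrable (fun z : ℝ => z) ν) (hν' : Integrable (fun z : ℝ => z) ν') :
    |sInf {x : ℝ | 0 ≤ x ∧ 0 ≤ ∫ z, h (x + z) ∂ν} -
      sInf {x : ℝ | 0 ≤ x ∧ 0 ≤ ∫ z, h (x + z) ∂ν'}| ≤
      (1 / m) *
        |(∫ z, h (sInf {x : ℝ | 0 ≤ ∫ z, h (x + z) ∂ν} + z) ∂ν) -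
          ∫ z, h (sInf {x : ℝ | 0 ≤ ∫ z, h (x + z) ∂ν} + z) ∂ν'| := by
  obtain ⟨hroot, hbdd, hne⟩ := aux_root hm hmM hmono hbil ν hν
  obtain ⟨hroot', hbdd', hne'⟩ := aux_root hm hmM hmono hbil ν' hν'
  set a := sInf {x : ℝ | 0 ≤ ∫ z, h (x + z) ∂ν} with ha
  set b := sInf {x : ℝ | 0 ≤ ∫ z, h (x + z) ∂ν'} with hb
  rw [aux_G0 hm hmM hmono hbil ν hν, aux_G0 hm hmM hmono hbil ν' hν', ← ha, ← hb]
  -- step 1: |max 0 a - max 0 b| ≤ |a - b|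
  have step1 : |max 0 a - max 0 b| ≤ |a - b| := by
    rw [max_comm 0 a, max_comm 0 b]
    exact abs_max_sub_max_le_abs a b 0
  -- step 2: m * |a - b| ≤ |Hν' a|
  have step2 : m * |a - b| ≤ |∫ z, h (a + z) ∂ν'| := by
    rcases le_total b a with hba | hab
    · have := (aux_diff hm hmM hmono hbil ν' hν' hba).1
      rw [hroot'] at this
      rw [abs_of_nonneg (by linarith : (0:ℝ) ≤ a - b)]
      calc m * (a - b) ≤ (∫ z, h (a + z) ∂ν') - 0 := by linarith
        _ ≤ |∫ z, h (a + z) ∂ν'| := by rw [sub_zero]; exact le_abs_self _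
    · have := (aux_diff hm hmM hmono hbil ν' hν' hab).1
      rw [hroot'] at this
      rw [abs_of_nonpos (by linarith : a - b ≤ 0)]
      calc m * -(a - b) ≤ 0 - (∫ z, h (a + z) ∂ν') := by linarith
        _ ≤ |∫ z, h (a + z) ∂ν'| := by
            rw [zero_sub]; exact neg_le_abs _
  have heq : |(∫ z, h (a + z) ∂ν) - ∫ z, h (a + z) ∂ν'| = |∫ z, h (a + z) ∂ν'| := by
    rw [hroot, zero_sub, abs_neg]
  rw [heq]
  calc |max 0 a - max 0 b| ≤ |a - b| := step1
    _ ≤ (1 / m) * |∫ z, h (a + z) ∂ν'| := by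
        rw [div_mul_eq_mul_div, one_mul, le_div_iff₀ hm, mul_comm]
        exact step2
end

section
/- For any two integrable real-valued random variables X and Y defined on a common probability space, with laws ν and ν' respectively, |G₀(ν) − G₀(ν')| ≤ (M/m)·E[|X−Y|]. In particular G₀ is Lipschitz with constant M/m with respect to the Wasserstein-1 distance. -/
open MeasureTheory

lemma G0_aux
    (h : ℝ → ℝ) (m M : ℝ) (hm : 0 < m) (hmM : m ≤ M)
    (hmono : Monotone h)
    (hbil : ∀ x y : ℝ, m * |x - y| ≤ |h x - h y| ∧ |h x - h y| ≤ M * |x - y|)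
    {Ω : Type*} [MeasurableSpace Ω] (P : Measure Ω) [IsProbabilityMeasure P]
    (X Y : Ω → ℝ) (hX : Integrable X P) (hY : Integrable Y P) :
    sInf {x : ℝ | 0 ≤ x ∧ 0 ≤ ∫ z, h (x + z) ∂(P.map Y)} ≤
      sInf {x : ℝ | 0 ≤ x ∧ 0 ≤ ∫ z, h (x + z) ∂(P.map X)} +
      (M / m) * ∫ ω, |X ω - Y ω| ∂P := by
  have hM0 : 0 < M := lt_of_lt_of_le hm hmM
  -- h is Lipschitz
  have hLip : LipschitzWith ⟨M, hM0.le⟩ h := by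
    apply LipschitzWith.of_dist_le_mul
    intro a b
    rw [Real.dist_eq, Real.dist_eq]
    exact (hbil a b).2
  have hcont : Continuous h := hLip.continuous
  -- integrability of compositions
  have int_comp : ∀ (Z : Ω → ℝ), Integrable Z P → ∀ x : ℝ,
      Integrable (fun ω => h (x + Z ω)) P := by
    intro Z hZ x
    have hmeas : AEStronglyMeasurable (fun ω => h (x + Z ω)) P :=
      hcont.comp_aestronglyMeasurable (aestronglyMeasurable_const.add hZ.1)
    refine Integrable.mono' (((integrable_const (|h 0| + M * |x|)).add (hZ.abs.const_mul M))) hmeas ?_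
    filter_upwards with ω
    have h1 : |h (x + Z ω) - h 0| ≤ M * |x + Z ω - 0| := (hbil _ _).2
    have : |h (x + Z ω)| ≤ |h 0| + M * |x + Z ω| := by
      have := abs_sub_abs_le_abs_sub (h (x + Z ω)) (h 0)
      have h2 : |x + Z ω - 0| = |x + Z ω| := by ring_nf
      nlinarith [abs_nonneg (h (x + Z ω)), abs_nonneg (h 0)]
    have h3 : |x + Z ω| ≤ |x| + |Z ω| := abs_add_le x (Z ω)
    simp only [Pi.add_apply, Real.norm_eq_abs]
    nlinarith [mul_le_mul_of_nonneg_left h3 hM0.le]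
  -- rewrite push-forward integrals
  have hmap : ∀ (Z : Ω → ℝ), Integrable Z P → ∀ x : ℝ,
      (∫ z, h (x + z) ∂(P.map Z)) = ∫ ω, h (x + Z ω) ∂P := by
    intro Z hZ x
    exact integral_map hZ.aemeasurable
      ((hcont.comp (continuous_const.add continuous_id)).aestronglyMeasurable)
  set E := ∫ ω, |X ω - Y ω| ∂P with hE
  have hE0 : 0 ≤ E := integral_nonneg fun ω => abs_nonneg _
  set δ := (M / m) * E with hδdef
  have hδ0 : 0 ≤ δ := mul_nonneg (div_nonneg hM0.le hm.le) hE0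
  set HX := fun x : ℝ => ∫ ω, h (x + X ω) ∂P with hHX
  set HY := fun x : ℝ => ∫ ω, h (x + Y ω) ∂P with hHY
  -- growth: HX x + m * t ≤ HX (x + t)
  have growth : ∀ x t : ℝ, 0 ≤ t → HX x + m * t ≤ HX (x + t) := by
    intro x t ht
    have hpt : ∀ ω, h (x + X ω) + m * t ≤ h (x + t + X ω) := by
      intro ω
      have h1 := (hbil (x + t + X ω) (x + X ω)).1
      have heq : (x + t + X ω) - (x + X ω) = t := by ring
      rw [heq, abs_of_nonneg ht] at h1
      have h2 : h (x + X ω) ≤ h (x + t + X ω) := hmono (by linarith)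
      rw [abs_of_nonneg (by linarith)] at h1
      linarith
    have := integral_mono ((int_comp X hX x).add (integrable_const (m * t)))
      (int_comp X hX (x + t)) hpt
    simp only [Pi.add_apply] at this
    rw [integral_add (int_comp X hX x) (integrable_const (m * t)), integral_const] at this
    simpa using this
  -- comparison: HX x - M * E ≤ HY x
  have comp : ∀ x : ℝ, HX x - M * E ≤ HY x := by
    intro x
    have hsub : HX x - HY x = ∫ ω, (h (x + X ω) - h (x + Y ω)) ∂P :=
      (integral_sub (int_comp X hX x) (int_comp Y hY x)).symm
    have hb : (∫ ω, (h (x + X ω) - h (x + Y ω)) ∂P) ≤ ∫ ω, M * |X ω - Y ω| ∂P := by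
      apply integral_mono ((int_comp X hX x).sub (int_comp Y hY x))
        ((hX.sub hY).abs.const_mul M)
      intro ω
      have h1 := (hbil (x + X ω) (x + Y ω)).2
      have heq : (x + X ω) - (x + Y ω) = X ω - Y ω := by ring
      rw [heq] at h1
      exact le_trans (le_abs_self _) h1
    rw [integral_const_mul] at hb
    have hEeq : M * (∫ a, |X a - Y a| ∂P) = M * E := rfl
    linarith [hsub, hb, hEeq]
  -- membership transfer
  set SX := {x : ℝ | 0 ≤ x ∧ 0 ≤ ∫ z, h (x + z) ∂(P.map X)} with hSX
  set SY := {x : ℝ | 0 ≤ x ∧ 0 ≤ ∫ z, h (x + z) ∂(P.map Y)} with hSY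
  have hSXeq : SX = {x : ℝ | 0 ≤ x ∧ 0 ≤ HX x} := by
    ext x; simp only [hSX, Set.mem_setOf_eq, hmap X hX x, hHX]
  have hSYeq : SY = {x : ℝ | 0 ≤ x ∧ 0 ≤ HY x} := by
    ext x; simp only [hSY, Set.mem_setOf_eq, hmap Y hY x, hHY]
  have transfer : ∀ x ∈ SX, x + δ ∈ SY := by
    intro x hx
    rw [hSXeq] at hx
    rw [hSYeq]
    refine ⟨by linarith [hx.1], ?_⟩
    have g := growth x δ hδ0
    have c := comp (x + δ)
    have hmδ : m * δ = M * E := by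
      rw [hδdef]
      field_simp [hm.ne']
    linarith [hx.2]
  -- nonemptiness of SX
  have hne : SX.Nonempty := by
    rw [hSXeq]
    refine ⟨max 0 (-(HX 0) / m), le_max_left _ _, ?_⟩
    have g := growth 0 (max 0 (-(HX 0) / m)) (le_max_left _ _)
    have : -(HX 0) / m ≤ max 0 (-(HX 0) / m) := le_max_right _ _
    have h2 : -(HX 0) ≤ m * max 0 (-(HX 0) / m) := by
      rw [div_le_iff₀ hm] at this
      linarith
    simpa using le_trans (by linarith) g
  have hbdd : BddBelow SY := ⟨0, fun x hx => hx.1⟩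
  have : ∀ x ∈ SX, sInf SY - δ ≤ x := by
    intro x hx
    have := csInf_le hbdd (transfer x hx)
    linarith
  have := le_csInf hne this
  linarith

/-- For integrable random variables `X`, `Y` with laws ν, ν',
`|G₀(ν) − G₀(ν')| ≤ (M/m)·E[|X−Y|]`. -/
theorem G0_wasserstein_lipschitz
    (h : ℝ → ℝ) (m M : ℝ) (hm : 0 < m) (hmM : m ≤ M)
    (hmono : Monotone h)
    (hbil : ∀ x y : ℝ, m * |x - y| ≤ |h x - h y| ∧ |h x - h y| ≤ M * |x - y|)
    {Ω : Type*} [MeasurableSpace Ω] (P : Measure Ω) [IsProbabilityMeasure P]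
    (X Y : Ω → ℝ) (hX : Integrable X P) (hY : Integrable Y P) :
    |sInf {x : ℝ | 0 ≤ x ∧ 0 ≤ ∫ z, h (x + z) ∂(P.map X)} -
      sInf {x : ℝ | 0 ≤ x ∧ 0 ≤ ∫ z, h (x + z) ∂(P.map Y)}| ≤
      (M / m) * ∫ ω, |X ω - Y ω| ∂P := by
  rw [abs_sub_le_iff]
  constructor
  · have := G0_aux h m M hm hmM hmono hbil P Y X hY hX
    have heq : (∫ ω, |Y ω - X ω| ∂P) = ∫ ω, |X ω - Y ω| ∂P := by
      congr 1; funext ω; exact abs_sub_comm _ _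
    rw [heq] at this
    linarith
  · have := G0_aux h m M hm hmM hmono hbil P X Y hX hY
    linarith
end

section
/- Fix a positive integer N. For any two vectors u = (u₁,…,u_N) and ū = (ū₁,…,ū_N) in ℝ^N, define G₀ᴺ(u) = inf{x ≥ 0 : (1/N)·Σ_{i=1}^{N} h(x + uᵢ) ≥ 0} (this is G₀ applied to the empirical measure (1/N)·Σᵢ δ_{uᵢ}). Then |G₀ᴺ(u) − G₀ᴺ(ū)| ≤ (M/m)·(1/N)·Σ_{i=1}^{N} |uᵢ − ūᵢ|. -/
open MeasureTheory Finset

/-- For the empirical version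
`G₀ᴺ(u) = inf{x ≥ 0 : (1/N)·Σᵢ h(x + uᵢ) ≥ 0}`, one has
`|G₀ᴺ(u) − G₀ᴺ(ū)| ≤ (M/m)·(1/N)·Σᵢ |uᵢ − ūᵢ|`. -/
theorem G0_empirical_lipschitz
    (h : ℝ → ℝ) (m M : ℝ) (hm : 0 < m) (hmM : m ≤ M)
    (hmono : Monotone h)
    (hbil : ∀ x y : ℝ, m * |x - y| ≤ |h x - h y| ∧ |h x - h y| ≤ M * |x - y|)
    (N : ℕ) (hN : 0 < N) (u ubar : Fin N → ℝ) :
    |sInf {x : ℝ | 0 ≤ x ∧ 0 ≤ (1 / (N : ℝ)) * ∑ i, h (x + u i)} -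
      sInf {x : ℝ | 0 ≤ x ∧ 0 ≤ (1 / (N : ℝ)) * ∑ i, h (x + ubar i)}| ≤
      (M / m) * ((1 / (N : ℝ)) * ∑ i, |u i - ubar i|) := by
  have hNpos : (0:ℝ) < N := by exact_mod_cast hN
  have hconv : ∀ S : ℝ, 0 ≤ (1/(N:ℝ)) * S ↔ 0 ≤ S := by
    intro S
    constructor
    · intro hS
      have hp : (0:ℝ) < 1/(N:ℝ) := by positivity
      nlinarith
    · intro hS; positivity
  have key : ∀ a b : ℝ, a ≤ b → m * (b - a) ≤ h b - h a := by
    intro a b hab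
    have h1 := (hbil b a).1
    rw [abs_of_nonneg (by linarith), abs_of_nonneg (by linarith [hmono hab])] at h1
    exact h1
  have keyM : ∀ a b : ℝ, h a - h b ≤ M * |a - b| :=
    fun a b => le_trans (le_abs_self _) (hbil a b).2
  -- nonemptiness of the constraint sets
  have hne : ∀ v : Fin N → ℝ,
      {x : ℝ | 0 ≤ x ∧ 0 ≤ (1 / (N : ℝ)) * ∑ i, h (x + v i)}.Nonempty := by
    intro v
    have hi0 : (⟨0, hN⟩ : Fin N) ∈ Finset.univ := mem_univ _
    set x0 : ℝ := 0 ⊔ Finset.univ.sup' ⟨_, hi0⟩ (fun i => |h 0| / m - v i) with hx0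
    refine ⟨x0, le_max_left _ _, (hconv _).2 (Finset.sum_nonneg fun i _ => ?_)⟩
    have hx : |h 0| / m - v i ≤ x0 :=
      le_trans (Finset.le_sup' (fun i => |h 0| / m - v i) (mem_univ i)) (le_max_right _ _)
    have hnn : |h 0| / m ≤ x0 + v i := by linarith
    have hmnn : 0 ≤ |h 0| / m := div_nonneg (abs_nonneg _) hm.le
    have hk := key 0 (x0 + v i) (by linarith)
    have hm2 : |h 0| ≤ m * (x0 + v i) := by
      rw [div_le_iff₀ hm] at hnn; linarith
    have := neg_abs_le (h 0)
    simp only [sub_zero] at hk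
    linarith
  have hbdd : ∀ v : Fin N → ℝ,
      BddBelow {x : ℝ | 0 ≤ x ∧ 0 ≤ (1 / (N : ℝ)) * ∑ i, h (x + v i)} :=
    fun v => ⟨0, fun x hx => hx.1⟩
  -- one-sided estimate
  have main : ∀ v w : Fin N → ℝ,
      sInf {x : ℝ | 0 ≤ x ∧ 0 ≤ (1 / (N : ℝ)) * ∑ i, h (x + v i)} ≤
        sInf {x : ℝ | 0 ≤ x ∧ 0 ≤ (1 / (N : ℝ)) * ∑ i, h (x + w i)} +
          (M / m) * ((1 / (N : ℝ)) * ∑ i, |v i - w i|) := by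
    intro v w
    set c : ℝ := (M / m) * ((1 / (N : ℝ)) * ∑ i, |v i - w i|) with hc
    have hcnn : 0 ≤ c := by
      apply mul_nonneg (div_nonneg (by linarith) hm.le)
      exact mul_nonneg (by positivity) (Finset.sum_nonneg fun i _ => abs_nonneg _)
    have step : ∀ x ∈ {x : ℝ | 0 ≤ x ∧ 0 ≤ (1 / (N : ℝ)) * ∑ i, h (x + w i)},
        sInf {x : ℝ | 0 ≤ x ∧ 0 ≤ (1 / (N : ℝ)) * ∑ i, h (x + v i)} ≤ x + c := by
      intro x hx
      apply csInf_le (hbdd v)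
      refine ⟨by linarith [hx.1], (hconv _).2 ?_⟩
      have hx2 : 0 ≤ ∑ i, h (x + w i) := (hconv _).1 hx.2
      have hpt : ∀ i ∈ Finset.univ, h (x + w i) + m * c - M * |v i - w i|
          ≤ h (x + c + v i) := by
        intro i _
        have h1 := key (x + v i) (x + c + v i) (by linarith)
        have h2 := keyM (x + w i) (x + v i)
        have : |(x + w i) - (x + v i)| = |v i - w i| := by
          rw [abs_sub_comm]; ring_nf
        rw [this] at h2
        have : (x + c + v i) - (x + v i) = c := by ring
        rw [this] at h1
        linarith
      have hsum := Finset.sum_le_sum hpt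
      rw [Finset.sum_sub_distrib, Finset.sum_add_distrib, Finset.sum_const,
        ← Finset.mul_sum, Finset.card_univ, Fintype.card_fin, nsmul_eq_mul] at hsum
      have hNmc : (N:ℝ) * (m * c) = M * ∑ i, |v i - w i| := by
        rw [hc]; field_simp
      linarith
    have hlb : sInf {x : ℝ | 0 ≤ x ∧ 0 ≤ (1 / (N : ℝ)) * ∑ i, h (x + v i)} - c ≤
        sInf {x : ℝ | 0 ≤ x ∧ 0 ≤ (1 / (N : ℝ)) * ∑ i, h (x + w i)} := by
      apply le_csInf (hne w)
      intro x hx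
      linarith [step x hx]
    linarith
  rw [abs_sub_le_iff]
  constructor
  · linarith [main u ubar]
  · have h2 := main ubar u
    have : ∑ i, |ubar i - u i| = ∑ i, |u i - ubar i| := by
      apply Finset.sum_congr rfl; intro i _; rw [abs_sub_comm]
    rw [this] at h2
    linarith
end
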